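/- For any two positive definite real matrices A and B (not necessarily commuting), Tr[(A^{1/2} B A^{1/2})^{1/2}] ≥ Tr(A^{1/2} B^{1/2}). -/

import Mathlib

open Matrix

section OldSqrt

open scoped ComplexOrder

/-- The positive semidefinite square root of a positive semidefinite matrix
(the Mathlib definition of December 2024, since removed from Mathlib). -/
noncomputable def Matrix.PosSemidef.sqrt {𝕜 : Type*} [RCLike 𝕜] {n : Type*} [Fintype n]
    [DecidableEq n] {A : Matrix n n 𝕜} (hA : A.PosSemidef) : Matrix n n 𝕜 :=
  hA.1.eigenvectorUnitary.1 * diagonal ((↑) ∘ (√·) ∘ hA.1.eigenvalues) *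
  (star hA.1.eigenvectorUnitary : Matrix n n 𝕜)

/-- The square root of a positive semidefinite matrix is positive semidefinite. -/
theorem Matrix.PosSemidef.posSemidef_sqrt {𝕜 : Type*} [RCLike 𝕜] {n : Type*} [Fintype n]
    [DecidableEq n] {A : Matrix n n 𝕜} (hA : A.PosSemidef) : PosSemidef hA.sqrt := by
  unfold Matrix.PosSemidef.sqrt
  refine (PosSemidef.diagonal fun i => ?_).mul_mul_conjTranspose_same _
  simp only [Function.comp_apply, Pi.zero_apply]
  exact RCLike.ofReal_nonneg.mpr (Real.sqrt_nonneg _)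

end OldSqrt

/-- If `A` and `B` are positive semidefinite, so is `√A * B * √A`. -/
lemma sqrt_sandwich_posSemidef {n : ℕ} {A B : Matrix (Fin n) (Fin n) ℝ}
    (hA : A.PosSemidef) (hB : B.PosSemidef) :
    (hA.sqrt * B * hA.sqrt).PosSemidef := by
  have h := hB.conjTranspose_mul_mul_same hA.sqrt
  rwa [hA.posSemidef_sqrt.1] at h

open scoped ComplexOrder in
theorem Matrix.PosSemidef.sqrt_mul_self {𝕜 : Type*} [RCLike 𝕜] {n : Type*} [Fintype n]
    [DecidableEq n] {A : Matrix n n 𝕜} (hA : A.PosSemidef) : hA.sqrt * hA.sqrt = A := by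
  unfold Matrix.PosSemidef.sqrt
  set D := diagonal ((↑) ∘ (√·) ∘ hA.1.eigenvalues : n → 𝕜) with hDdef
  have hU : (star hA.1.eigenvectorUnitary : Matrix n n 𝕜) * hA.1.eigenvectorUnitary = 1 :=
    Unitary.coe_star_mul_self _
  have hD : D * D = diagonal (RCLike.ofReal ∘ hA.1.eigenvalues : n → 𝕜) := by
    rw [hDdef, diagonal_mul_diagonal]
    congr 1
    funext i
    simp only [Function.comp_apply]
    rw [← RCLike.ofReal_mul, Real.mul_self_sqrt (hA.eigenvalues_nonneg i)]
  conv_rhs => rw [hA.1.spectral_theorem, Unitary.conjStarAlgAut_apply]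
  rw [show (hA.1.eigenvectorUnitary : Matrix n n 𝕜) * D * (star hA.1.eigenvectorUnitary : Matrix n n 𝕜) *
      ((hA.1.eigenvectorUnitary : Matrix n n 𝕜) * D * (star hA.1.eigenvectorUnitary : Matrix n n 𝕜)) =
      (hA.1.eigenvectorUnitary : Matrix n n 𝕜) * (D * ((star hA.1.eigenvectorUnitary : Matrix n n 𝕜) *
      hA.1.eigenvectorUnitary) * D) * (star hA.1.eigenvectorUnitary : Matrix n n 𝕜) by
    simp only [Matrix.mul_assoc], hU, Matrix.mul_one, hD]

/-- Frobenius inner product as a trace. -/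
lemma frob_trace {n : ℕ} (X Y : Matrix (Fin n) (Fin n) ℝ) :
    (Xᵀ * Y).trace = ∑ p : Fin n × Fin n, X p.1 p.2 * Y p.1 p.2 := by
  rw [Fintype.sum_prod_type]
  simp only [Matrix.trace, Matrix.diag, Matrix.mul_apply, Matrix.transpose_apply]
  exact Finset.sum_comm

/-- If `Q` is PSD and `U` is orthogonal, then `Tr(Q U) ≤ Tr Q`. -/
lemma trace_psd_mul_orth_le {n : ℕ} {Q U : Matrix (Fin n) (Fin n) ℝ}
    (hQ : Q.PosSemidef) (hU : U * Uᵀ = 1) : (Q * U).trace ≤ Q.trace := by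
  set R := hQ.sqrt with hRdef
  have hRsym : Rᵀ = R := by
    have := hQ.posSemidef_sqrt.1
    rwa [Matrix.IsHermitian, conjTranspose_eq_transpose_of_trivial] at this
  have hQR : R * R = Q := hQ.sqrt_mul_self
  have e1 : (Q * U).trace = (Rᵀ * (R * U)).trace := by
    rw [hRsym, ← Matrix.mul_assoc, hQR]
  have e2 : Q.trace = (Rᵀ * R).trace := by rw [hRsym, hQR]
  have e3 : ((R * U)ᵀ * (R * U)).trace = Q.trace := by
    rw [transpose_mul, hRsym, trace_mul_comm]
    have h4 : (R * U) * (Uᵀ * R) = Q := by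
      rw [Matrix.mul_assoc, ← Matrix.mul_assoc U Uᵀ R, hU, Matrix.one_mul, hQR]
    rw [h4]
  have hQnonneg : 0 ≤ Q.trace := by
    rw [e2, frob_trace]
    exact Finset.sum_nonneg fun p _ => mul_self_nonneg _
  have cs := Finset.sum_mul_sq_le_sq_mul_sq Finset.univ
    (fun p : Fin n × Fin n => R p.1 p.2) (fun p : Fin n × Fin n => (R * U) p.1 p.2)
  have hsq : ((Q * U).trace) ^ 2 ≤ Q.trace ^ 2 := by
    rw [e1, frob_trace]
    calc (∑ p : Fin n × Fin n, R p.1 p.2 * (R * U) p.1 p.2) ^ 2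
        ≤ (∑ p : Fin n × Fin n, R p.1 p.2 ^ 2) *
          (∑ p : Fin n × Fin n, (R * U) p.1 p.2 ^ 2) := cs
      _ = Q.trace ^ 2 := by
          rw [sq]
          congr 1
          · rw [e2, frob_trace]; exact Finset.sum_congr rfl fun p _ => pow_two _
          · rw [← e3, frob_trace]; exact Finset.sum_congr rfl fun p _ => pow_two _
  nlinarith [hsq, hQnonneg]

/-- The square root of a PSD real matrix is symmetric. -/
lemma psd_sqrt_transpose {n : ℕ} {Q : Matrix (Fin n) (Fin n) ℝ} (hQ : Q.PosSemidef) :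
    hQ.sqrtᵀ = hQ.sqrt := by
  have := hQ.posSemidef_sqrt.1
  rwa [Matrix.IsHermitian, conjTranspose_eq_transpose_of_trivial] at this

/-- For any two positive definite real matrices `A` and `B` (not necessarily commuting),
`Tr[(A^{1/2} B A^{1/2})^{1/2}] ≥ Tr(A^{1/2} B^{1/2})`. -/
theorem trace_sqrt_sandwich_ge_trace_sqrt_mul_sqrt
    {n : ℕ} (A B : Matrix (Fin n) (Fin n) ℝ) (hA : A.PosDef) (hB : B.PosDef) :
    (sqrt_sandwich_posSemidef hA.posSemidef hB.posSemidef).sqrt.trace ≥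
      (hA.posSemidef.sqrt * hB.posSemidef.sqrt).trace := by
  set SA := hA.posSemidef.sqrt with hSA
  set SB := hB.posSemidef.sqrt with hSB
  set P := (sqrt_sandwich_posSemidef hA.posSemidef hB.posSemidef).sqrt with hP
  set M := SA * SB with hM
  have hPP : P * P = SA * B * SA :=
    (sqrt_sandwich_posSemidef hA.posSemidef hB.posSemidef).sqrt_mul_self
  have hSAt : SAᵀ = SA := psd_sqrt_transpose hA.posSemidef
  have hSBt : SBᵀ = SB := psd_sqrt_transpose hB.posSemidef
  have hPt : Pᵀ = P := psd_sqrt_transpose _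
  have hMMt : M * Mᵀ = P * P := by
    rw [hPP, hM, transpose_mul, hSAt, hSBt, Matrix.mul_assoc, ← Matrix.mul_assoc SB SB SA,
      hB.posSemidef.sqrt_mul_self, ← Matrix.mul_assoc]
  have hdetA : SA.det * SA.det = A.det := by
    rw [← det_mul, hA.posSemidef.sqrt_mul_self]
  have hdetP : P.det * P.det = SA.det * B.det * SA.det := by
    rw [← det_mul, hPP, det_mul, det_mul]
  have hPdet : IsUnit P.det := by
    have h1 : P.det * P.det > 0 := by
      rw [hdetP]
      have h2 : SA.det * SA.det > 0 := by rw [hdetA]; exact hA.det_pos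
      nlinarith [hB.det_pos]
    exact isUnit_iff_ne_zero.mpr (by intro h; rw [h] at h1; simp at h1)
  set U := P⁻¹ * M with hUdef
  have hU : U * Uᵀ = 1 := by
    rw [hUdef, transpose_mul, transpose_nonsing_inv, hPt]
    calc P⁻¹ * M * (Mᵀ * P⁻¹) = P⁻¹ * (M * Mᵀ) * P⁻¹ := by
          simp only [hM, Matrix.mul_assoc]
      _ = P⁻¹ * (P * P) * P⁻¹ := by rw [hMMt]
      _ = (P⁻¹ * P) * (P * P⁻¹) := by rw [Matrix.mul_assoc, Matrix.mul_assoc, Matrix.mul_assoc]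
      _ = 1 := by rw [nonsing_inv_mul P hPdet, mul_nonsing_inv P hPdet, Matrix.one_mul]
  have hPU : P * U = M := by
    rw [hUdef, ← Matrix.mul_assoc, mul_nonsing_inv P hPdet, Matrix.one_mul]
  have key := trace_psd_mul_orth_le
    (sqrt_sandwich_posSemidef hA.posSemidef hB.posSemidef).posSemidef_sqrt hU
  rw [hPU] at key
  exact key
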